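/- Let (x_i, v_i)_{i=1}^N be a C¹ solution of the open-loop flocking-with-steering system on [0,∞), fix θ > 0, let λ(θ,t) be the number of indices j with a_{ij}(t) ≥ θ for every i, and let ᾱ = inf over all i and all t ≥ 0 of α_i(t). Then for almost every t ≥ 0: d_X'(t) ≤ d_V(t) and d_V'(t) ≤ −ᾱ · λ(θ,t)² · θ² · d_V(t) + d_β(t). -/

import Mathlib

open MeasureTheory Set Filter
open Topology
open scoped RealInnerProductSpace NNReal

/-- Diameter (maximum pairwise distance) of a finite family of trajectories at time `t`. -/
noncomputable def pairDiam {N d : ℕ} (f : Fin N → ℝ → EuclideanSpace ℝ (Fin d)) (t : ℝ) : ℝ :=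
  ⨆ p : Fin N × Fin N, ‖f p.1 t - f p.2 t‖

section Aux
variable {N d : ℕ}

lemma norm_sub_le_pairDiam (f : Fin N → ℝ → EuclideanSpace ℝ (Fin d)) (i j : Fin N) (t : ℝ) :
    ‖f i t - f j t‖ ≤ pairDiam f t := by
  have h : ∀ p : Fin N × Fin N, ‖f p.1 t - f p.2 t‖ ≤ ⨆ q : Fin N × Fin N, ‖f q.1 t - f q.2 t‖ :=
    fun p => le_ciSup (f := fun q : Fin N × Fin N => ‖f q.1 t - f q.2 t‖)
      ((Set.finite_range _).bddAbove) p
  exact h (i, j)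

lemma pairDiam_nonneg (hN : 0 < N) (f : Fin N → ℝ → EuclideanSpace ℝ (Fin d)) (t : ℝ) :
    0 ≤ pairDiam f t := by
  have := norm_sub_le_pairDiam f ⟨0, hN⟩ ⟨0, hN⟩ t
  simpa using this

lemma exists_pairDiam_eq (hN : 0 < N) (f : Fin N → ℝ → EuclideanSpace ℝ (Fin d)) (t : ℝ) :
    ∃ p : Fin N × Fin N, pairDiam f t = ‖f p.1 t - f p.2 t‖ := by
  haveI : Nonempty (Fin N × Fin N) := ⟨(⟨0, hN⟩, ⟨0, hN⟩)⟩
  obtain ⟨p, hp⟩ := Finite.exists_max fun p : Fin N × Fin N => ‖f p.1 t - f p.2 t‖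
  exact ⟨p, le_antisymm (ciSup_le hp) (norm_sub_le_pairDiam f p.1 p.2 t)⟩

lemma deriv_eq_of_le_of_eq {F g : ℝ → ℝ} {D D' t : ℝ} (hF : HasDerivAt F D t)
    (hg : HasDerivAt g D' t) (hle : ∀ s, g s ≤ F s) (heq : g t = F t) : D = D' := by
  have h : HasDerivAt (fun s => F s - g s) (D - D') t := hF.sub hg
  have hmin : IsLocalMin (fun s => F s - g s) t := by
    refine Filter.Eventually.of_forall fun s => ?_
    simp only
    have := hle s
    linarith
  have := hmin.hasDerivAt_eq_zero h
  linarith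

lemma pairDiam_lipschitzOnWith (hN : 0 < N) (f : Fin N → ℝ → EuclideanSpace ℝ (Fin d))
    (f' : Fin N → ℝ → EuclideanSpace ℝ (Fin d)) {C : ℝ} (hC : 0 ≤ C) {s : Set ℝ} (hs : Convex ℝ s)
    (hderiv : ∀ i, ∀ u ∈ s, HasDerivWithinAt (f i) (f' i u) s u)
    (hbound : ∀ i, ∀ u ∈ s, ‖f' i u‖ ≤ C) :
    LipschitzOnWith (Real.toNNReal (2 * C)) (pairDiam f) s := by
  haveI : Nonempty (Fin N × Fin N) := ⟨(⟨0, hN⟩, ⟨0, hN⟩)⟩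
  have hC2 : (0:ℝ) ≤ 2 * C := by linarith
  rw [lipschitzOnWith_iff_dist_le_mul]
  have key : ∀ p ∈ s, ∀ q ∈ s, pairDiam f p ≤ pairDiam f q + 2 * C * dist p q := by
    intro p hp q hq
    refine ciSup_le fun r => ?_
    have h1 : ‖f r.1 p - f r.1 q‖ ≤ C * ‖p - q‖ :=
      hs.norm_image_sub_le_of_norm_hasDerivWithin_le (hderiv r.1) (hbound r.1) hq hp
    have h2 : ‖f r.2 p - f r.2 q‖ ≤ C * ‖p - q‖ :=
      hs.norm_image_sub_le_of_norm_hasDerivWithin_le (hderiv r.2) (hbound r.2) hq hp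
    have h3 : ‖f r.1 p - f r.2 p‖
        ≤ ‖f r.1 q - f r.2 q‖ + (‖f r.1 p - f r.1 q‖ + ‖f r.2 p - f r.2 q‖) := by
      have he : f r.1 p - f r.2 p
          = (f r.1 q - f r.2 q) + ((f r.1 p - f r.1 q) - (f r.2 p - f r.2 q)) := by abel
      rw [he]
      refine (norm_add_le _ _).trans ?_
      gcongr
      exact norm_sub_le _ _
    have h4 := norm_sub_le_pairDiam f r.1 r.2 q
    have h5 : ‖p - q‖ = dist p q := by rw [Real.dist_eq, Real.norm_eq_abs]
    rw [h5] at h1 h2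
    linarith
  intro p hp q hq
  rw [Real.coe_toNNReal _ hC2, Real.dist_eq, abs_sub_le_iff]
  constructor
  · have := key p hp q hq
    linarith
  · have := key q hq p hp
    rw [dist_comm q p] at this
    linarith

lemma ae_differentiableAt_of_lipschitzOn (f : ℝ → ℝ)
    (h : ∀ n : ℕ, ∃ K : ℝ≥0, LipschitzOnWith K f (Icc (0:ℝ) (n + 1))) :
    ∀ᵐ t ∂(volume : Measure ℝ), 0 < t → DifferentiableAt ℝ f t := by
  have H : ∀ n : ℕ, ∀ᵐ t ∂(volume : Measure ℝ),
      t ∈ Ioo (0:ℝ) (n + 1) → DifferentiableAt ℝ f t := by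
    intro n
    obtain ⟨K, hK⟩ := h n
    obtain ⟨g, hg, hfg⟩ := hK.extend_real
    filter_upwards [hg.ae_differentiableAt] with t ht hmem
    have hmem' : Icc (0:ℝ) (n + 1) ∈ 𝓝 t :=
      Icc_mem_nhds hmem.1 hmem.2
    have heq : f =ᶠ[𝓝 t] g := eventually_of_mem hmem' hfg
    exact (heq.differentiableAt_iff).2 ht
  rw [← ae_all_iff] at H
  filter_upwards [H] with t ht htpos
  obtain ⟨n, hn⟩ := exists_nat_gt t
  exact ht n ⟨htpos, by linarith⟩

end Aux

/-- For a `C¹` solution of the open-loop flocking-with-steering system on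
`[0,∞)`, fixed `θ > 0`, with `λ(θ,t)` the cardinality of the global active set and
`ᾱ = inf_{i, t ≥ 0} α_i(t)`, for almost every `t ≥ 0`:
`d_X'(t) ≤ d_V(t)` and `d_V'(t) ≤ -ᾱ λ(θ,t)² θ² d_V(t) + d_β(t)`. -/
theorem diameter_system_differential_inequalities
    (N d : ℕ) (hN : 2 ≤ N) (θ : ℝ) (hθ : 0 < θ)
    (x v β : Fin N → ℝ → EuclideanSpace ℝ (Fin d))
    (a : Fin N → Fin N → ℝ → ℝ) (α : Fin N → ℝ → ℝ)
    (ha_cont : ∀ i j, ContinuousOn (a i j) (Ici 0))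
    (ha_nonneg : ∀ i j, ∀ t ∈ Ici (0:ℝ), 0 ≤ a i j t)
    (ha_sum : ∀ i, ∀ t ∈ Ici (0:ℝ), ∑ j, a i j t = 1)
    (hα_cont : ∀ i, ContinuousOn (α i) (Ici 0))
    (hα_nonneg : ∀ i, ∀ t ∈ Ici (0:ℝ), 0 ≤ α i t)
    (hβ_cont : ∀ i, ContinuousOn (β i) (Ici 0))
    (hx : ∀ i, ∀ t ∈ Ici (0:ℝ), HasDerivWithinAt (x i) (v i t) (Ici 0) t)
    (hv : ∀ i, ∀ t ∈ Ici (0:ℝ),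
      HasDerivWithinAt (v i)
        (α i t • ((∑ j, a i j t • v j t) - v i t) + β i t) (Ici 0) t) :
    ∀ᵐ t ∂(volume.restrict (Ici (0:ℝ))),
      (∃ D, HasDerivAt (pairDiam x) D t ∧ D ≤ pairDiam v t) ∧
      (∃ D, HasDerivAt (pairDiam v) D t ∧
        D ≤ -(⨅ p : Fin N × (Ici (0:ℝ)), α p.1 (p.2 : ℝ)) *
              ((Finset.univ.filter fun j => ∀ i, θ ≤ a i j t).card : ℝ) ^ 2 *
              θ ^ 2 * pairDiam v t
            + pairDiam β t) := by

  have hN0 : 0 < N := by omega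
  have hvcont : ∀ i, ContinuousOn (v i) (Ici 0) := fun i t ht => (hv i t ht).continuousWithinAt
  have hFvcont : ∀ i, ContinuousOn
      (fun u => α i u • ((∑ j, a i j u • v j u) - v i u) + β i u) (Ici 0) := by
    intro i
    refine ContinuousOn.add ?_ (hβ_cont i)
    refine ContinuousOn.smul (hα_cont i) ?_
    refine ContinuousOn.sub ?_ (hvcont i)
    exact continuousOn_finset_sum _ fun j _ => (ha_cont i j).smul (hvcont j)
  -- uniform bounds on compacts
  have hbnd : ∀ (F : Fin N → ℝ → EuclideanSpace ℝ (Fin d)),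
      (∀ i, ContinuousOn (F i) (Ici 0)) → ∀ n : ℕ,
      ∃ C : ℝ, 0 ≤ C ∧ ∀ i, ∀ u ∈ Icc (0:ℝ) (n+1), ‖F i u‖ ≤ C := by
    intro F hF n
    have hsum : ContinuousOn (fun u => ∑ i, ‖F i u‖) (Icc (0:ℝ) (n+1)) :=
      continuousOn_finset_sum _ fun i _ => ((hF i).mono (Icc_subset_Ici_self)).norm
    obtain ⟨C, hC⟩ := (isCompact_Icc).exists_bound_of_continuousOn hsum
    have h00 : (0:ℝ) ∈ Icc (0:ℝ) (n+1) := ⟨le_refl 0, by positivity⟩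
    refine ⟨C, (norm_nonneg _).trans (hC 0 h00), ?_⟩
    intro i u hu
    have h1 : ‖F i u‖ ≤ ∑ j, ‖F j u‖ :=
      Finset.single_le_sum (fun j _ => norm_nonneg (F j u)) (Finset.mem_univ i)
    have h2 := hC u hu
    rw [Real.norm_eq_abs] at h2
    exact h1.trans ((le_abs_self _).trans h2)
  have hlipx : ∀ n : ℕ, ∃ K : ℝ≥0, LipschitzOnWith K (pairDiam x) (Icc (0:ℝ) (n + 1)) := by
    intro n
    obtain ⟨C, hC0, hC⟩ := hbnd v hvcont n
    exact ⟨_, pairDiam_lipschitzOnWith hN0 x (fun i u => v i u) hC0 (convex_Icc _ _)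
      (fun i u hu => (hx i u (Icc_subset_Ici_self hu)).mono Icc_subset_Ici_self)
      (fun i u hu => hC i u hu)⟩
  have hlipv : ∀ n : ℕ, ∃ K : ℝ≥0, LipschitzOnWith K (pairDiam v) (Icc (0:ℝ) (n + 1)) := by
    intro n
    obtain ⟨C, hC0, hC⟩ := hbnd
      (fun i u => α i u • ((∑ j, a i j u • v j u) - v i u) + β i u) hFvcont n
    exact ⟨_, pairDiam_lipschitzOnWith hN0 v
      (fun i u => α i u • ((∑ j, a i j u • v j u) - v i u) + β i u) hC0 (convex_Icc _ _)
      (fun i u hu => (hv i u (Icc_subset_Ici_self hu)).mono Icc_subset_Ici_self)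
      (fun i u hu => hC i u hu)⟩
  have hXd := ae_differentiableAt_of_lipschitzOn (pairDiam x) hlipx
  have hVd := ae_differentiableAt_of_lipschitzOn (pairDiam v) hlipv
  have hne : ∀ᵐ t ∂(volume : Measure ℝ), t ≠ (0:ℝ) := by
    rw [ae_iff]
    have h : {t : ℝ | ¬ t ≠ 0} = {0} := by ext u; simp
    rw [h]
    exact measure_singleton 0
  filter_upwards [ae_restrict_mem measurableSet_Ici, ae_restrict_of_ae hne,
    ae_restrict_of_ae hXd, ae_restrict_of_ae hVd] with t ht htne hX hV
  have htpos : 0 < t := lt_of_le_of_ne ht (Ne.symm htne)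
  have hXdiff := hX htpos
  have hVdiff := hV htpos
  have hmem : Ici (0:ℝ) ∈ 𝓝 t := Ici_mem_nhds htpos
  have hdx : ∀ i, HasDerivAt (x i) (v i t) t := fun i => (hx i t ht).hasDerivAt hmem
  have hdv : ∀ m, HasDerivAt (v m)
      (α m t • ((∑ j, a m j t • v j t) - v m t) + β m t) t :=
    fun m => (hv m t ht).hasDerivAt hmem
  constructor
  · -- first inequality
    refine ⟨deriv (pairDiam x) t, hXdiff.hasDerivAt, ?_⟩
    by_cases h0 : pairDiam x t = 0
    · have hD : deriv (pairDiam x) t = 0 :=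
        deriv_eq_of_le_of_eq hXdiff.hasDerivAt (hasDerivAt_const t 0)
          (fun s => pairDiam_nonneg hN0 x s) h0.symm
      rw [hD]
      exact pairDiam_nonneg hN0 v t
    · obtain ⟨p, hp⟩ := exists_pairDiam_eq hN0 x t
      have hcpos : 0 < pairDiam x t :=
        lt_of_le_of_ne (pairDiam_nonneg hN0 x t) (Ne.symm h0)
      set u : EuclideanSpace ℝ (Fin d) := (pairDiam x t)⁻¹ • (x p.1 t - x p.2 t) with hu
      have hunorm : ‖u‖ = 1 := by
        rw [hu, norm_smul, Real.norm_eq_abs, abs_inv, abs_of_pos hcpos, ← hp]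
        field_simp
      have hw : HasDerivAt (fun s => x p.1 s - x p.2 s) (v p.1 t - v p.2 t) t :=
        (hdx p.1).sub (hdx p.2)
      have hg : HasDerivAt (fun s => ⟪u, x p.1 s - x p.2 s⟫) ⟪u, v p.1 t - v p.2 t⟫ t := by
        exact ((innerSL ℝ u).hasFDerivAt.comp_hasDerivAt t hw)
      have hle : ∀ s, ⟪u, x p.1 s - x p.2 s⟫ ≤ pairDiam x s := fun s =>
        (real_inner_le_norm u _).trans
          (by rw [hunorm, one_mul]; exact norm_sub_le_pairDiam x p.1 p.2 s)
      have heq : ⟪u, x p.1 t - x p.2 t⟫ = pairDiam x t := by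
        rw [hu, real_inner_smul_left, real_inner_self_eq_norm_mul_norm, ← hp]
        field_simp
      have hD := deriv_eq_of_le_of_eq hXdiff.hasDerivAt hg hle heq
      rw [hD]
      exact (real_inner_le_norm u _).trans
        (by rw [hunorm, one_mul]; exact norm_sub_le_pairDiam v p.1 p.2 t)
  · -- second inequality
    refine ⟨deriv (pairDiam v) t, hVdiff.hasDerivAt, ?_⟩
    have hβ0 := pairDiam_nonneg hN0 β t
    set A := (⨅ p : Fin N × (Ici (0:ℝ)), α p.1 (p.2 : ℝ)) with hA
    haveI : Nonempty (Fin N × ↑(Ici (0:ℝ))) := ⟨(⟨0, hN0⟩, ⟨(0:ℝ), Set.self_mem_Ici⟩)⟩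
    have hA0 : 0 ≤ A := le_ciInf fun p => hα_nonneg p.1 p.2 p.2.2
    have hAle : ∀ m, A ≤ α m t := by
      intro m
      refine ciInf_le ⟨0, ?_⟩ (⟨m, ⟨t, ht⟩⟩ : Fin N × (Ici (0:ℝ)))
      rintro y ⟨p, rfl⟩
      exact hα_nonneg p.1 p.2 p.2.2
    set lam : ℝ := ((Finset.univ.filter fun j => ∀ i, θ ≤ a i j t).card : ℝ) with hlam
    have hlam0 : 0 ≤ lam := Nat.cast_nonneg _
    by_cases h0 : pairDiam v t = 0
    · have hD : deriv (pairDiam v) t = 0 :=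
        deriv_eq_of_le_of_eq hVdiff.hasDerivAt (hasDerivAt_const t 0)
          (fun s => pairDiam_nonneg hN0 v s) h0.symm
      rw [hD, h0, mul_zero, zero_add]
      exact hβ0
    · obtain ⟨q, hq⟩ := exists_pairDiam_eq hN0 v t
      have hcpos : 0 < pairDiam v t :=
        lt_of_le_of_ne (pairDiam_nonneg hN0 v t) (Ne.symm h0)
      set u : EuclideanSpace ℝ (Fin d) := (pairDiam v t)⁻¹ • (v q.1 t - v q.2 t) with hu
      have hunorm : ‖u‖ = 1 := by
        rw [hu, norm_smul, Real.norm_eq_abs, abs_inv, abs_of_pos hcpos, ← hq]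
        field_simp
      set φ : Fin N → ℝ := fun j => ⟪u, v j t⟫ with hφ
      obtain ⟨i, _, hi⟩ := Finset.exists_max_image Finset.univ φ ⟨⟨0, hN0⟩, Finset.mem_univ _⟩
      obtain ⟨k, _, hk⟩ := Finset.exists_min_image Finset.univ φ ⟨⟨0, hN0⟩, Finset.mem_univ _⟩
      have hik : φ i - φ k = pairDiam v t := by
        have h1 : φ i - φ k ≤ pairDiam v t := by
          have he : φ i - φ k = ⟪u, v i t - v k t⟫ := by
            rw [hφ]; simp [inner_sub_right]
          rw [he]
          exact (real_inner_le_norm u _).trans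
            (by rw [hunorm, one_mul]; exact norm_sub_le_pairDiam v i k t)
        have hqq : ⟪u, v q.1 t - v q.2 t⟫ = pairDiam v t := by
          rw [hu, real_inner_smul_left, real_inner_self_eq_norm_mul_norm, ← hq]
          field_simp
        have he2 : φ q.1 - φ q.2 = ⟪u, v q.1 t - v q.2 t⟫ := by
          rw [hφ]; simp [inner_sub_right]
        have h2 := hi q.1 (Finset.mem_univ _)
        have h3 := hk q.2 (Finset.mem_univ _)
        linarith [he2 ▸ hqq]
      have hg : HasDerivAt (fun s => ⟪u, v i s⟫ - ⟪u, v k s⟫)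
          (⟪u, α i t • ((∑ j, a i j t • v j t) - v i t) + β i t⟫
            - ⟪u, α k t • ((∑ j, a k j t • v j t) - v k t) + β k t⟫) t := by
        have h1 : HasDerivAt (fun s => ⟪u, v i s⟫)
            ⟪u, α i t • ((∑ j, a i j t • v j t) - v i t) + β i t⟫ t := by
          exact ((innerSL ℝ u).hasFDerivAt.comp_hasDerivAt t (hdv i))
        have h2 : HasDerivAt (fun s => ⟪u, v k s⟫)
            ⟪u, α k t • ((∑ j, a k j t • v j t) - v k t) + β k t⟫ t := by
          exact ((innerSL ℝ u).hasFDerivAt.comp_hasDerivAt t (hdv k))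
        exact h1.sub h2
      have hle : ∀ s, ⟪u, v i s⟫ - ⟪u, v k s⟫ ≤ pairDiam v s := by
        intro s
        have he : ⟪u, v i s⟫ - ⟪u, v k s⟫ = ⟪u, v i s - v k s⟫ := by
          rw [inner_sub_right]
        rw [he]
        exact (real_inner_le_norm u _).trans
          (by rw [hunorm, one_mul]; exact norm_sub_le_pairDiam v i k s)
      have heqg : ⟪u, v i t⟫ - ⟪u, v k t⟫ = pairDiam v t := hik
      have hD := deriv_eq_of_le_of_eq hVdiff.hasDerivAt hg hle heqg
      rw [hD]
      -- algebraic estimate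
      set Ti : ℝ := ∑ j, a i j t * (φ j - φ i) with hTi
      set Tk : ℝ := ∑ j, a k j t * (φ j - φ k) with hTk
      have hinner : ∀ m, ⟪u, α m t • ((∑ j, a m j t • v j t) - v m t) + β m t⟫
          = α m t * (∑ j, a m j t * (φ j - φ m)) + ⟪u, β m t⟫ := by
        intro m
        rw [inner_add_right, real_inner_smul_right]
        congr 1
        rw [inner_sub_right, inner_sum]
        have hterm : ∀ j ∈ Finset.univ, ⟪u, a m j t • v j t⟫ = a m j t * φ j :=
          fun j _ => real_inner_smul_right _ _ _
        rw [Finset.sum_congr rfl hterm]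
        have : ∑ j, a m j t * (φ j - φ m) = (∑ j, a m j t * φ j) - (∑ j, a m j t) * φ m := by
          rw [Finset.sum_mul, ← Finset.sum_sub_distrib]
          exact Finset.sum_congr rfl fun j _ => by ring
        rw [this, ha_sum m t ht, one_mul]
      have hTi0 : Ti ≤ 0 := by
        rw [hTi]
        refine Finset.sum_nonpos fun j _ => mul_nonpos_of_nonneg_of_nonpos
          (ha_nonneg i j t ht) ?_
        have := hi j (Finset.mem_univ j)
        linarith
      have hTk0 : 0 ≤ Tk := by
        rw [hTk]
        refine Finset.sum_nonneg fun j _ => mul_nonneg (ha_nonneg k j t ht) ?_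
        have := hk j (Finset.mem_univ j)
        linarith
      have hβle : ⟪u, β i t⟫ - ⟪u, β k t⟫ ≤ pairDiam β t := by
        rw [← inner_sub_right]
        exact (real_inner_le_norm u _).trans
          (by rw [hunorm, one_mul]; exact norm_sub_le_pairDiam β i k t)
      -- sum over active set
      have hsumS : Ti - Tk ≤ -(θ * lam * pairDiam v t) := by
        set S := (Finset.univ.filter fun j => ∀ m, θ ≤ a m j t) with hS
        have hstep : Ti - Tk = ∑ j, (a i j t * (φ j - φ i) - a k j t * (φ j - φ k)) := by
          rw [hTi, hTk, Finset.sum_sub_distrib]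
        have htermnp : ∀ j ∈ Finset.univ,
            a i j t * (φ j - φ i) - a k j t * (φ j - φ k) ≤ 0 := by
          intro j _
          have h1 : a i j t * (φ j - φ i) ≤ 0 := mul_nonpos_of_nonneg_of_nonpos
            (ha_nonneg i j t ht) (by linarith [hi j (Finset.mem_univ j)])
          have h2 : 0 ≤ a k j t * (φ j - φ k) := mul_nonneg
            (ha_nonneg k j t ht) (by linarith [hk j (Finset.mem_univ j)])
          linarith
        have hsub : ∑ j, (a i j t * (φ j - φ i) - a k j t * (φ j - φ k))
            ≤ ∑ j ∈ S, (a i j t * (φ j - φ i) - a k j t * (φ j - φ k)) := by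
          have hneg := Finset.sum_le_sum_of_subset_of_nonneg
            (Finset.filter_subset (fun j => ∀ m, θ ≤ a m j t) Finset.univ)
            (f := fun j => -(a i j t * (φ j - φ i) - a k j t * (φ j - φ k)))
            (fun j hj _ => by
              show (0:ℝ) ≤ -(a i j t * (φ j - φ i) - a k j t * (φ j - φ k))
              linarith [htermnp j hj])
          simp only [Finset.sum_neg_distrib] at hneg
          linarith
        have hterm : ∀ j ∈ S,
            a i j t * (φ j - φ i) - a k j t * (φ j - φ k) ≤ θ * (φ k - φ i) := by
          intro j hj
          rw [hS, Finset.mem_filter] at hj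
          have hji : θ ≤ a i j t := hj.2 i
          have hjk : θ ≤ a k j t := hj.2 k
          have h1 : a i j t * (φ j - φ i) ≤ θ * (φ j - φ i) :=
            mul_le_mul_of_nonpos_right hji (by linarith [hi j (Finset.mem_univ j)])
          have h2 : θ * (φ j - φ k) ≤ a k j t * (φ j - φ k) :=
            mul_le_mul_of_nonneg_right hjk (by linarith [hk j (Finset.mem_univ j)])
          have h3 : θ * (φ j - φ i) - θ * (φ j - φ k) = θ * (φ k - φ i) := by ring
          linarith
        have hsum2 : ∑ j ∈ S, (a i j t * (φ j - φ i) - a k j t * (φ j - φ k))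
            ≤ ∑ _j ∈ S, θ * (φ k - φ i) := Finset.sum_le_sum hterm
        have hconst : ∑ _j ∈ S, θ * (φ k - φ i) = lam * (θ * (φ k - φ i)) := by
          rw [Finset.sum_const, nsmul_eq_mul, hlam, hS]
        have hfin : lam * (θ * (φ k - φ i)) = -(θ * lam * pairDiam v t) := by
          rw [← hik]; ring
        have hcomb := hsub.trans (hsum2.trans_eq (hconst.trans hfin))
        rw [hstep]
        exact hcomb
      -- θ * lam ≤ 1
      have hlamθ : lam * θ ≤ 1 := by
        set S := (Finset.univ.filter fun j => ∀ m, θ ≤ a m j t) with hS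
        have h1 : ∑ _j ∈ S, θ ≤ ∑ j ∈ S, a ⟨0, hN0⟩ j t := by
          refine Finset.sum_le_sum fun j hj => ?_
          rw [hS, Finset.mem_filter] at hj
          exact hj.2 ⟨0, hN0⟩
        have h2 : ∑ j ∈ S, a ⟨0, hN0⟩ j t ≤ ∑ j, a ⟨0, hN0⟩ j t :=
          Finset.sum_le_sum_of_subset_of_nonneg (Finset.filter_subset _ _)
            (fun j _ _ => ha_nonneg _ j t ht)
        rw [Finset.sum_const, nsmul_eq_mul] at h1
        rw [ha_sum ⟨0, hN0⟩ t ht] at h2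
        have : lam * θ = (S.card : ℝ) * θ := by rw [hlam, hS]
        rw [this]
        linarith
      -- put everything together
      rw [hinner i, hinner k]
      have hEi : α i t * Ti ≤ A * Ti := mul_le_mul_of_nonpos_right (hAle i) hTi0
      have hEk : A * Tk ≤ α k t * Tk := mul_le_mul_of_nonneg_right (hAle k) hTk0
      have hATT : A * (Ti - Tk) ≤ A * (-(θ * lam * pairDiam v t)) :=
        mul_le_mul_of_nonneg_left hsumS hA0
      have hkey : A * (lam * θ) * (lam * θ) * pairDiam v t ≤ A * (lam * θ) * 1 * pairDiam v t := by
        have hnn : 0 ≤ A * (lam * θ) * pairDiam v t :=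
          mul_nonneg (mul_nonneg hA0 (mul_nonneg hlam0 hθ.le)) hcpos.le
        nlinarith [hnn, hlamθ]
      rw [← hTi, ← hTk]
      have e1 : A * (Ti - Tk) = A * Ti - A * Tk := by ring
      have e2 : A * (-(θ * lam * pairDiam v t)) = -(A * (lam * θ) * 1 * pairDiam v t) := by ring
      have e3 : -A * lam ^ 2 * θ ^ 2 * pairDiam v t
          = -(A * (lam * θ) * (lam * θ) * pairDiam v t) := by ring
      linarith [hEi, hEk, hβle, hATT, hkey, e1, e2, e3]
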